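/- arXiv:2007.10386 — 3 statements merged into one kernel-verified Lean document; each statement's English description precedes it below -/
import Mathlib

section
/- Let m ≥ 1 be an integer, 0 < q < 1, |ξ| < π/2, 0 ≤ ρ < 1 and 0 ≤ γ < 1. If [ (1-ρ) sec ξ + (1-γ) ] · m(m+1) q² / (1-q)² + [ 2(1-ρ) sec ξ + (1-γ)(4-ρ) ] · m q / (1-q) + (1-γ)(2-ρ) · ( 1 - (1-q)^m ) ≤ 1 - γ, then the Pascal distribution series Θ_q^m belongs to the class 𝒦(ξ, γ, ρ). -/
noncomputable section

open Complex Real Set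

/-- The open unit disk in the complex plane. -/
def unitDisk : Set ℂ := Metric.ball 0 1

/-- The class 𝒜 of normalized analytic functions on the unit disk:
`f` analytic on `𝔻`, `f 0 = 0`, `f' 0 = 1`. -/
def NormalizedAnalytic (f : ℂ → ℂ) : Prop :=
  AnalyticOn ℂ f unitDisk ∧ f 0 = 0 ∧ deriv f 0 = 1

/-- The spirallike class `𝒮(ξ, γ, ρ)`. -/
def SpiralS (ξ γ ρ : ℝ) (f : ℂ → ℂ) : Prop :=
  NormalizedAnalytic f ∧ Set.InjOn f unitDisk ∧
    ∀ z ∈ unitDisk, z ≠ 0 →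
      (1 - (ρ : ℂ)) * f z + (ρ : ℂ) * z * deriv f z ≠ 0 ∧
      γ * Real.cos ξ <
        (Complex.exp (Complex.I * ξ) * (z * deriv f z) /
          ((1 - (ρ : ℂ)) * f z + (ρ : ℂ) * z * deriv f z)).re

/-- The convex spirallike class `𝒦(ξ, γ, ρ)`. -/
def SpiralK (ξ γ ρ : ℝ) (f : ℂ → ℂ) : Prop :=
  NormalizedAnalytic f ∧ Set.InjOn f unitDisk ∧
    ∀ z ∈ unitDisk,
      deriv f z + (ρ : ℂ) * z * deriv (deriv f) z ≠ 0 ∧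
      γ * Real.cos ξ <
        (Complex.exp (Complex.I * ξ) * (z * deriv (deriv f) z + deriv f z) /
          (deriv f z + (ρ : ℂ) * z * deriv (deriv f) z)).re

/-- The spirallike class `𝒮(ξ, γ)`. -/
def SpiralS0 (ξ γ : ℝ) (f : ℂ → ℂ) : Prop :=
  NormalizedAnalytic f ∧ Set.InjOn f unitDisk ∧
    ∀ z ∈ unitDisk, z ≠ 0 →
      f z ≠ 0 ∧
      γ * Real.cos ξ <
        (Complex.exp (Complex.I * ξ) * (z * deriv f z) / f z).re

/-- The convex spirallike class `𝒦(ξ, γ)`. -/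
def SpiralK0 (ξ γ : ℝ) (f : ℂ → ℂ) : Prop :=
  NormalizedAnalytic f ∧ Set.InjOn f unitDisk ∧
    ∀ z ∈ unitDisk,
      deriv f z ≠ 0 ∧
      γ * Real.cos ξ <
        (Complex.exp (Complex.I * ξ) *
          (1 + z * deriv (deriv f) z / deriv f z)).re

/-- The class `ℛ^τ(ϑ, δ)`. -/
def ClassR (τ : ℂ) (ϑ δ : ℝ) (f : ℂ → ℂ) : Prop :=
  NormalizedAnalytic f ∧ Set.InjOn f unitDisk ∧
    ∀ z ∈ unitDisk,
      ‖
        (((1 - (ϑ : ℂ)) * (if z = 0 then 1 else f z / z) + (ϑ : ℂ) * deriv f z - 1) /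
          (2 * τ * (1 - (δ : ℂ)) +
            (1 - (ϑ : ℂ)) * (if z = 0 then 1 else f z / z) + (ϑ : ℂ) * deriv f z - 1))‖ < 1

/-- The Pascal distribution series
`Θ_q^m(z) = z + ∑_{n=2}^∞ C(n+m-2, m-1) q^(n-1) (1-q)^m z^n`. -/
def pascalTheta (m : ℕ) (q : ℝ) : ℂ → ℂ := fun z =>
  z + ∑' n : ℕ, ((n + m).choose (m - 1) : ℂ) * (q : ℂ) ^ (n + 1) * (1 - (q : ℂ)) ^ m * z ^ (n + 2)

/-- The integral operator `𝒢_q^m(z) = ∫_0^z Θ_q^m(t)/t dt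
= z + ∑_{n=2}^∞ C(n+m-2, m-1) q^(n-1) (1-q)^m z^n / n`. -/
def pascalG (m : ℕ) (q : ℝ) : ℂ → ℂ := fun z =>
  z + ∑' n : ℕ, ((n + m).choose (m - 1) : ℂ) * (q : ℂ) ^ (n + 1) * (1 - (q : ℂ)) ^ m *
    z ^ (n + 2) / ((n : ℂ) + 2)


noncomputable section StmtAux

open Complex Real Set

/-! ### Auxiliary definitions: closed form of the Pascal series and its derivatives -/

def gFun' (m : ℕ) (q : ℝ) : ℂ → ℂ := fun z =>
  z + (1 - (q:ℂ))^m * (z * (((1 - (q:ℂ)*z)^m)⁻¹ - 1))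

def g1Fun' (m : ℕ) (q : ℝ) : ℂ → ℂ := fun z =>
  1 + (1 - (q:ℂ))^m * ((((1 - (q:ℂ)*z)^m)⁻¹ - 1) + z * ((m:ℂ) * q * ((1 - (q:ℂ)*z)^(m+1))⁻¹))

def g2Fun' (m : ℕ) (q : ℝ) : ℂ → ℂ := fun z =>
  (1 - (q:ℂ))^m * (2 * m * q * ((1 - (q:ℂ)*z)^(m+1))⁻¹
    + (m:ℂ) * (m+1) * q^2 * z * ((1 - (q:ℂ)*z)^(m+2))⁻¹)

/-! ### Series identities -/

lemma base_hasSum' (m : ℕ) (hm : 1 ≤ m) (x : ℂ) (hx : ‖x‖ < 1) :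
    HasSum (fun j : ℕ => ((j + (m-1)).choose (m-1) : ℂ) * x ^ j) (1 / (1 - x) ^ m) := by
  have := hasSum_choose_mul_geometric_of_norm_lt_one (m-1) hx
  rwa [Nat.sub_add_cancel hm] at this

lemma shift_hasSum' (m : ℕ) (hm : 1 ≤ m) (x : ℂ) (hx : ‖x‖ < 1) :
    HasSum (fun n : ℕ => ((n + m).choose (m-1) : ℂ) * x ^ (n+1)) (1 / (1 - x) ^ m - 1) := by
  have h := base_hasSum' m hm x hx
  have h2 : HasSum (fun n : ℕ => (((n+1) + (m-1)).choose (m-1) : ℂ) * x ^ (n+1))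
      (1 / (1 - x) ^ m - 1) := by
    rw [hasSum_nat_add_iff (f := fun j : ℕ => ((j + (m-1)).choose (m-1) : ℂ) * x ^ j) 1]
    simpa using h
  have e : ∀ n : ℕ, n + 1 + (m-1) = n + m := fun n => by omega
  simpa only [e] using h2

lemma base_hasSum_real' (m : ℕ) (hm : 1 ≤ m) {x : ℝ} (hx : |x| < 1) :
    HasSum (fun j : ℕ => ((j + (m-1)).choose (m-1) : ℝ) * x ^ j) (1 / (1 - x) ^ m) := by
  have := hasSum_choose_mul_geometric_of_norm_lt_one (𝕜 := ℝ) (m-1) (by rwa [Real.norm_eq_abs])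
  rwa [Nat.sub_add_cancel hm] at this

lemma shift_hasSum_real' (m : ℕ) (hm : 1 ≤ m) {x : ℝ} (hx : |x| < 1) :
    HasSum (fun n : ℕ => ((n + m).choose (m-1) : ℝ) * x ^ (n+1)) (1 / (1 - x) ^ m - 1) := by
  have h := base_hasSum_real' m hm hx
  have h2 : HasSum (fun n : ℕ => (((n+1) + (m-1)).choose (m-1) : ℝ) * x ^ (n+1))
      (1 / (1 - x) ^ m - 1) := by
    rw [hasSum_nat_add_iff (f := fun j : ℕ => ((j + (m-1)).choose (m-1) : ℝ) * x ^ j) 1]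
    simpa using h
  have e : ∀ n : ℕ, n + 1 + (m-1) = n + m := fun n => by omega
  simpa only [e] using h2

lemma qz_norm_lt (q : ℝ) (hq0 : 0 < q) (hq1 : q < 1) {z : ℂ} (hz : ‖z‖ < 1) :
    ‖(q:ℂ) * z‖ < 1 := by
  rw [norm_mul, Complex.norm_real, Real.norm_eq_abs, abs_of_pos hq0]
  nlinarith [norm_nonneg z]

lemma theta_hasSum' (m : ℕ) (hm : 1 ≤ m) (q : ℝ) (hq0 : 0 < q) (hq1 : q < 1)
    {z : ℂ} (hz : ‖z‖ < 1) :
    HasSum (fun n : ℕ => ((n + m).choose (m - 1) : ℂ) * (q:ℂ) ^ (n + 1) * (1 - (q:ℂ)) ^ m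
        * z ^ (n + 2))
      ((1 - (q:ℂ))^m * (z * (((1 - (q:ℂ)*z)^m)⁻¹ - 1))) := by
  have hx : ‖(q:ℂ) * z‖ < 1 := qz_norm_lt q hq0 hq1 hz
  have h := ((shift_hasSum' m hm ((q:ℂ)*z) hx).mul_left ((1 - (q:ℂ))^m * z))
  rw [one_div] at h
  have h2 : (1 - (q:ℂ))^m * z * (((1 - (q:ℂ)*z)^m)⁻¹ - 1)
      = (1 - (q:ℂ))^m * (z * (((1 - (q:ℂ)*z)^m)⁻¹ - 1)) := by ring
  rw [h2] at h
  convert h using 2 with n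
  rfl
  ring

/-! ### Derivatives of the closed form -/

lemma hasDerivAt_invpow' (k : ℕ) (hk : 1 ≤ k) (Q z : ℂ) (hw : 1 - Q * z ≠ 0) :
    HasDerivAt (fun z : ℂ => (((1:ℂ) - Q * z) ^ k)⁻¹)
      ((k:ℂ) * Q * (((1:ℂ) - Q * z) ^ (k+1))⁻¹) z := by
  have hbase : HasDerivAt (fun z : ℂ => (1:ℂ) - Q * z) (-Q) z := by
    simpa using ((hasDerivAt_id z).const_mul Q).const_sub 1
  have hpow := hbase.pow k
  have h := hpow.inv (pow_ne_zero k hw)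
  convert h using 1
  rfl
  rfl
  rfl
  set w := 1 - Q * z
  have h2 : w ^ (k - 1) * w ^ (k + 1) = (w ^ k) ^ 2 := by
    rw [← pow_add, ← pow_mul]; congr 1; omega
  show _ = _ / (w ^ k) ^ 2
  rw [eq_div_iff (pow_ne_zero 2 (pow_ne_zero k hw)), ← h2]
  have hwk : w ^ (k+1) ≠ 0 := pow_ne_zero _ hw
  field_simp

lemma hasDerivAt_g' (m : ℕ) (hm : 1 ≤ m) (q : ℝ) (z : ℂ) (hw : 1 - (q:ℂ) * z ≠ 0) :
    HasDerivAt (gFun' m q) (g1Fun' m q z) z := by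
  have h1 := hasDerivAt_invpow' m hm (q:ℂ) z hw
  have h2 : HasDerivAt (fun z : ℂ => z * (((1 - (q:ℂ)*z)^m)⁻¹ - 1))
      (1 * ((((1 - (q:ℂ)*z)^m)⁻¹ - 1)) + z * ((m:ℂ) * q * ((1 - (q:ℂ)*z)^(m+1))⁻¹)) z :=
    (hasDerivAt_id z).mul (h1.sub_const 1)
  have h4 := (hasDerivAt_id z).add (h2.const_mul ((1 - (q:ℂ))^m))
  convert h4 using 1
  rfl
  rfl
  rfl
  simp only [g1Fun']
  ring

lemma hasDerivAt_g1' (m : ℕ) (hm : 1 ≤ m) (q : ℝ) (z : ℂ) (hw : 1 - (q:ℂ) * z ≠ 0) :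
    HasDerivAt (g1Fun' m q) (g2Fun' m q z) z := by
  have h1 := hasDerivAt_invpow' m hm (q:ℂ) z hw
  have h1' := hasDerivAt_invpow' (m+1) (by omega) (q:ℂ) z hw
  have h2 : HasDerivAt (fun z : ℂ => z * ((m:ℂ) * q * ((1 - (q:ℂ)*z)^(m+1))⁻¹))
      (1 * ((m:ℂ) * q * ((1 - (q:ℂ)*z)^(m+1))⁻¹)
        + z * ((m:ℂ) * q * (((m:ℂ)+1) * q * ((1 - (q:ℂ)*z)^(m+2))⁻¹))) z := by
    refine (hasDerivAt_id z).mul ?_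
    have := h1'.const_mul ((m:ℂ) * q)
    convert this using 1
    push_cast
    ring
  have h3 := (((h1.sub_const 1).add h2).const_mul ((1 - (q:ℂ))^m)).const_add (1:ℂ)
  convert h3 using 1
  rfl
  rfl
  rfl
  simp only [g2Fun']
  ring

/-! ### Norm estimates -/

lemma pow_sub_pow_norm_le' (z w : ℂ) (hz : ‖z‖ ≤ 1) (hw : ‖w‖ ≤ 1) (n : ℕ) :
    ‖z ^ n - w ^ n‖ ≤ n * ‖z - w‖ := by
  rw [← geom_sum₂_mul, norm_mul]
  have h1 : ‖∑ i ∈ Finset.range n, z ^ i * w ^ (n - 1 - i)‖ ≤ n := by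
    calc ‖∑ i ∈ Finset.range n, z ^ i * w ^ (n - 1 - i)‖
        ≤ ∑ i ∈ Finset.range n, ‖z ^ i * w ^ (n - 1 - i)‖ := norm_sum_le _ _
      _ ≤ ∑ _i ∈ Finset.range n, (1:ℝ) := by
          apply Finset.sum_le_sum
          intro i _
          rw [norm_mul, norm_pow, norm_pow]
          calc ‖z‖ ^ i * ‖w‖ ^ (n-1-i) ≤ 1 * 1 := by
                apply mul_le_mul (pow_le_one₀ (norm_nonneg _) hz)
                  (pow_le_one₀ (norm_nonneg _) hw) (by positivity) zero_le_one
            _ = 1 := by ring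
      _ = n := by simp
  exact mul_le_mul_of_nonneg_right h1 (norm_nonneg _)

lemma norm_hasSum_le' {f : ℕ → ℂ} {a : ℂ} {g : ℕ → ℝ} {b : ℝ}
    (hf : HasSum f a) (hg : HasSum g b) (hle : ∀ n, ‖f n‖ ≤ g n) : ‖a‖ ≤ b := by
  have hsum : Summable fun n => ‖f n‖ :=
    Summable.of_nonneg_of_le (fun n => norm_nonneg _) hle hg.summable
  calc ‖a‖ = ‖∑' n, f n‖ := by rw [hf.tsum_eq]
    _ ≤ ∑' n, ‖f n‖ := norm_tsum_le_tsum_norm hsum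
    _ ≤ ∑' n, g n := Summable.tsum_le_tsum hle hsum hg.summable
    _ = b := hg.tsum_eq

lemma w_norm_ge (q : ℝ) (hq0 : 0 < q) (hq1 : q < 1) {z : ℂ} (hz : ‖z‖ ≤ 1) :
    1 - q ≤ ‖1 - (q:ℂ) * z‖ := by
  have h1 : ‖(1:ℂ)‖ - ‖(q:ℂ) * z‖ ≤ ‖1 - (q:ℂ) * z‖ := norm_sub_norm_le _ _
  have h2 : ‖(q:ℂ) * z‖ ≤ q := by
    rw [norm_mul, Complex.norm_real, Real.norm_eq_abs, abs_of_pos hq0]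
    nlinarith [norm_nonneg z]
  rw [norm_one] at h1
  linarith

lemma w_ne_zero (q : ℝ) (hq0 : 0 < q) (hq1 : q < 1) {z : ℂ} (hz : ‖z‖ < 1) :
    1 - (q:ℂ) * z ≠ 0 := by
  intro h
  have := w_norm_ge q hq0 hq1 hz.le
  rw [h, norm_zero] at this
  linarith

lemma invpow_norm_le (q : ℝ) (hq0 : 0 < q) (hq1 : q < 1) {z : ℂ} (hz : ‖z‖ ≤ 1) (k : ℕ) :
    ‖((1 - (q:ℂ) * z) ^ k)⁻¹‖ ≤ 1 / (1-q)^k := by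
  rw [norm_inv, norm_pow, one_div]
  have h1q : (0:ℝ) < 1 - q := by linarith
  have := w_norm_ge q hq0 hq1 hz
  exact inv_anti₀ (pow_pos h1q k) (pow_le_pow_left₀ h1q.le this k)

lemma oneminq_pow_norm (q : ℝ) (hq0 : 0 < q) (hq1 : q < 1) (m : ℕ) :
    ‖(1 - (q:ℂ))^m‖ = (1-q)^m := by
  have : (1 - (q:ℂ)) = ((1 - q : ℝ) : ℂ) := by push_cast; ring
  rw [this, ← Complex.ofReal_pow, Complex.norm_real, Real.norm_eq_abs]
  exact abs_of_nonneg (pow_nonneg (by linarith) m)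


/-! ### Bounds B1 and B2 -/

lemma B1_bound (m : ℕ) (hm : 1 ≤ m) (q : ℝ) (hq0 : 0 < q) (hq1 : q < 1)
    {z : ℂ} (hz : ‖z‖ < 1) :
    ‖g1Fun' m q z - 1‖ ≤ (1 - (1-q)^m) + m * q / (1-q) := by
  have h1q : (0:ℝ) < 1 - q := by linarith
  have hqr : |q| < 1 := by rw [abs_of_pos hq0]; exact hq1
  have hx : ‖(q:ℂ) * z‖ < 1 := qz_norm_lt q hq0 hq1 hz
  have hA : ‖((1 - (q:ℂ)*z)^m)⁻¹ - 1‖ ≤ 1/(1-q)^m - 1 := by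
    have hs := shift_hasSum' m hm ((q:ℂ)*z) hx
    rw [one_div] at hs
    refine norm_hasSum_le' hs (shift_hasSum_real' m hm hqr) ?_
    intro n
    rw [norm_mul, norm_pow]
    have h1 : ‖((n + m).choose (m-1) : ℂ)‖ = ((n + m).choose (m-1) : ℝ) :=
      Complex.norm_natCast _
    rw [h1]
    have h2 : ‖(q:ℂ) * z‖ ^ (n+1) ≤ q ^ (n+1) :=
      pow_le_pow_left₀ (norm_nonneg _) (by
        rw [norm_mul, Complex.norm_real, Real.norm_eq_abs, abs_of_pos hq0]
        nlinarith [norm_nonneg z, hz.le]) (n+1)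
    have h3 : (0:ℝ) ≤ ((n + m).choose (m-1) : ℝ) := by positivity
    nlinarith [h2, h3]
  have hB : ‖z * ((m:ℂ) * q * ((1 - (q:ℂ)*z)^(m+1))⁻¹)‖ ≤ m * q * (1/(1-q)^(m+1)) := by
    rw [norm_mul, norm_mul]
    have h4 : ‖(m:ℂ) * (q:ℂ)‖ = m * q := by
      have he2 : ((m:ℂ) * (q:ℂ)) = ((m * q : ℝ) : ℂ) := by push_cast; ring
      rw [he2, Complex.norm_real, Real.norm_eq_abs]
      exact abs_of_nonneg (by positivity)
    rw [h4]
    have h5 := invpow_norm_le q hq0 hq1 hz.le (m+1)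
    have h6 : (0:ℝ) ≤ (m:ℝ) * q := by positivity
    have h8 : ‖z‖ * ‖((1 - (q:ℂ)*z)^(m+1))⁻¹‖ ≤ 1/(1-q)^(m+1) := by
      calc ‖z‖ * ‖((1 - (q:ℂ)*z)^(m+1))⁻¹‖ ≤ 1 * (1/(1-q)^(m+1)) :=
            mul_le_mul hz.le h5 (norm_nonneg _) zero_le_one
        _ = 1/(1-q)^(m+1) := one_mul _
    calc ‖z‖ * (↑m * q * ‖((1 - (q:ℂ)*z)^(m+1))⁻¹‖)
        = ↑m * q * (‖z‖ * ‖((1 - (q:ℂ)*z)^(m+1))⁻¹‖) := by ring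
      _ ≤ ↑m * q * (1/(1-q)^(m+1)) := mul_le_mul_of_nonneg_left h8 h6
  have hnorm : ‖g1Fun' m q z - 1‖
      ≤ (1-q)^m * ((1/(1-q)^m - 1) + m * q * (1/(1-q)^(m+1))) := by
    have he : g1Fun' m q z - 1 = (1 - (q:ℂ))^m * ((((1 - (q:ℂ)*z)^m)⁻¹ - 1)
        + z * ((m:ℂ) * q * ((1 - (q:ℂ)*z)^(m+1))⁻¹)) := by
      simp only [g1Fun']; ring
    rw [he, norm_mul, oneminq_pow_norm q hq0 hq1 m]
    have htri := norm_add_le ((((1 - (q:ℂ)*z)^m)⁻¹ - 1))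
      (z * ((m:ℂ) * q * ((1 - (q:ℂ)*z)^(m+1))⁻¹))
    have hb : (0:ℝ) ≤ (1-q)^m := by positivity
    nlinarith [hA, hB, htri]
  refine hnorm.trans (le_of_eq ?_)
  have hbm : (1-q)^m ≠ 0 := by positivity
  have hbm1 : (1-q)^(m+1) ≠ 0 := by positivity
  field_simp
  ring

lemma B2_bound (m : ℕ) (hm : 1 ≤ m) (q : ℝ) (hq0 : 0 < q) (hq1 : q < 1)
    {z : ℂ} (hz : ‖z‖ < 1) :
    ‖z * g2Fun' m q z‖ < m * (m+1) * q^2 / (1-q)^2 + 2 * (m * q / (1-q)) := by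
  have h1q : (0:ℝ) < 1 - q := by linarith
  have hm0 : (0:ℝ) < m := by exact_mod_cast hm
  have hMpos : (0:ℝ) < m * (m+1) * q^2 / (1-q)^2 + 2 * (m * q / (1-q)) := by
    have hm1 : (0:ℝ) < (m:ℝ) + 1 := by linarith
    have : (0:ℝ) < m * (m+1) * q^2 / (1-q)^2 := by
      apply div_pos
      · exact mul_pos (mul_pos hm0 hm1) (pow_pos hq0 2)
      · positivity
    have h2 : (0:ℝ) < m * q / (1-q) := div_pos (mul_pos hm0 hq0) h1q
    linarith
  have hM : ‖g2Fun' m q z‖ ≤ m * (m+1) * q^2 / (1-q)^2 + 2 * (m * q / (1-q)) := by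
    have h5 := invpow_norm_le q hq0 hq1 hz.le (m+1)
    have h6 := invpow_norm_le q hq0 hq1 hz.le (m+2)
    have hn1 : ‖(2 * (m:ℂ) * (q:ℂ) * ((1 - (q:ℂ)*z)^(m+1))⁻¹)‖
        ≤ 2 * m * q * (1/(1-q)^(m+1)) := by
      rw [norm_mul]
      have he : ‖2 * (m:ℂ) * (q:ℂ)‖ = 2 * m * q := by
        have he2 : (2 * (m:ℂ) * (q:ℂ)) = ((2 * m * q : ℝ) : ℂ) := by push_cast; ring
        rw [he2, Complex.norm_real, Real.norm_eq_abs]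
        exact abs_of_nonneg (by positivity)
      rw [he]
      exact mul_le_mul_of_nonneg_left h5 (by positivity)
    have hn2 : ‖(m:ℂ) * ((m:ℂ)+1) * (q:ℂ)^2 * z * ((1 - (q:ℂ)*z)^(m+2))⁻¹‖
        ≤ m * (m+1) * q^2 * (1/(1-q)^(m+2)) := by
      rw [norm_mul, norm_mul]
      have he : ‖(m:ℂ) * ((m:ℂ)+1) * (q:ℂ)^2‖ = m * (m+1) * q^2 := by
        have he2 : ((m:ℂ) * ((m:ℂ)+1) * (q:ℂ)^2) = ((m * (m+1) * q^2 : ℝ) : ℂ) := by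
          push_cast; ring
        rw [he2, Complex.norm_real, Real.norm_eq_abs]
        exact abs_of_nonneg (by positivity)
      rw [he]
      have h7 : (0:ℝ) ≤ (m:ℝ) * ((m:ℝ)+1) * q^2 := by positivity
      have h8 : ‖z‖ * ‖((1 - (q:ℂ)*z)^(m+2))⁻¹‖ ≤ 1/(1-q)^(m+2) := by
        calc ‖z‖ * ‖((1 - (q:ℂ)*z)^(m+2))⁻¹‖ ≤ 1 * (1/(1-q)^(m+2)) :=
              mul_le_mul hz.le h6 (norm_nonneg _) zero_le_one
          _ = 1/(1-q)^(m+2) := one_mul _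
      calc ↑m * (↑m+1) * q^2 * ‖z‖ * ‖((1 - (q:ℂ)*z)^(m+2))⁻¹‖
          = ↑m * (↑m+1) * q^2 * (‖z‖ * ‖((1 - (q:ℂ)*z)^(m+2))⁻¹‖) := by ring
        _ ≤ ↑m * (↑m+1) * q^2 * (1/(1-q)^(m+2)) := mul_le_mul_of_nonneg_left h8 h7
    have hg2 : ‖g2Fun' m q z‖ ≤ (1-q)^m * (2 * m * q * (1/(1-q)^(m+1))
        + m * (m+1) * q^2 * (1/(1-q)^(m+2))) := by
      simp only [g2Fun']
      rw [norm_mul, oneminq_pow_norm q hq0 hq1 m]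
      have htri := norm_add_le (2 * (m:ℂ) * (q:ℂ) * ((1 - (q:ℂ)*z)^(m+1))⁻¹)
        ((m:ℂ) * ((m:ℂ)+1) * (q:ℂ)^2 * z * ((1 - (q:ℂ)*z)^(m+2))⁻¹)
      have hb : (0:ℝ) ≤ (1-q)^m := by positivity
      nlinarith [hn1, hn2, htri]
    refine hg2.trans (le_of_eq ?_)
    have hbm : (1-q)^m ≠ 0 := by positivity
    have hbm1 : (1-q)^(m+1) ≠ 0 := by positivity
    have hbm2 : (1-q)^(m+2) ≠ 0 := by positivity
    field_simp
    ring
  calc ‖z * g2Fun' m q z‖ = ‖z‖ * ‖g2Fun' m q z‖ := norm_mul _ _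
    _ ≤ ‖z‖ * (m * (m+1) * q^2 / (1-q)^2 + 2 * (m * q / (1-q))) :=
        mul_le_mul_of_nonneg_left hM (norm_nonneg z)
    _ < 1 * (m * (m+1) * q^2 / (1-q)^2 + 2 * (m * q / (1-q))) :=
        mul_lt_mul_of_pos_right hz hMpos
    _ = _ := one_mul _

/-! ### Sum of coefficients for injectivity -/

lemma choose_identity' (m n : ℕ) (hm : 1 ≤ m) :
    (n + m).choose m * m = (n + m).choose (m-1) * (n+1) := by
  have e : m - 1 + 1 = m := by omega
  have h := Nat.choose_succ_right_eq (n + m) (m - 1)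
  rw [e] at h
  rw [h]
  congr 1
  omega

lemma coeffSum_hasSum (m : ℕ) (hm : 1 ≤ m) (q : ℝ) (hq0 : 0 < q) (hq1 : q < 1) :
    HasSum (fun n : ℕ => ((n + m).choose (m-1) : ℝ) * q ^ (n+1) * (1-q)^m * (n+2))
      (m * q / (1 - q) + (1 - (1-q)^m)) := by
  have hq : |q| < 1 := by rw [abs_of_pos hq0]; exact hq1
  have h1 : HasSum (fun n : ℕ => ((n + m).choose m : ℝ) * q ^ n) (1 / (1-q)^(m+1)) := by
    have := base_hasSum_real' (m+1) (by omega) hq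
    simpa using this
  have h2 := shift_hasSum_real' m hm hq
  have h1' := h1.mul_left (m * q * (1-q)^m)
  have h2' := h2.mul_left ((1-q)^m)
  have hsum := h1'.add h2'
  have hne : (1 - q) ≠ 0 := by linarith
  convert hsum using 1
  · rfl
  · funext n
    have hc := choose_identity' m n hm
    have hc' : ((n + m).choose m : ℝ) * m = ((n + m).choose (m-1) : ℝ) * (n+1) := by
      exact_mod_cast congrArg (Nat.cast : ℕ → ℝ) hc
    push_cast
    linear_combination (-(q^(n+1) * (1-q)^m)) * hc'
  · field_simp
    ring


/-! ### Lemmas about `pascalTheta` on the unit disk -/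

lemma mem_unitDisk' {z : ℂ} : z ∈ unitDisk ↔ ‖z‖ < 1 := by
  simp [unitDisk, Metric.mem_ball, dist_zero_right]

lemma unitDisk_open' : IsOpen unitDisk := Metric.isOpen_ball

lemma pascalTheta_eqOn' (m : ℕ) (hm : 1 ≤ m) (q : ℝ) (hq0 : 0 < q) (hq1 : q < 1) :
    Set.EqOn (pascalTheta m q) (gFun' m q) unitDisk := by
  intro z hz
  have hz' : ‖z‖ < 1 := mem_unitDisk'.mp hz
  have h := theta_hasSum' m hm q hq0 hq1 hz'
  simp only [pascalTheta, gFun']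
  rw [h.tsum_eq]

lemma deriv_pascalTheta' (m : ℕ) (hm : 1 ≤ m) (q : ℝ) (hq0 : 0 < q) (hq1 : q < 1)
    {z : ℂ} (hz : z ∈ unitDisk) :
    deriv (pascalTheta m q) z = g1Fun' m q z := by
  have hev : pascalTheta m q =ᶠ[nhds z] gFun' m q := by
    filter_upwards [unitDisk_open'.mem_nhds hz] with w hw
    exact pascalTheta_eqOn' m hm q hq0 hq1 hw
  rw [hev.deriv_eq]
  exact (hasDerivAt_g' m hm q z (w_ne_zero q hq0 hq1 (mem_unitDisk'.mp hz))).deriv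

lemma deriv2_pascalTheta' (m : ℕ) (hm : 1 ≤ m) (q : ℝ) (hq0 : 0 < q) (hq1 : q < 1)
    {z : ℂ} (hz : z ∈ unitDisk) :
    deriv (deriv (pascalTheta m q)) z = g2Fun' m q z := by
  have hev : deriv (pascalTheta m q) =ᶠ[nhds z] g1Fun' m q := by
    filter_upwards [unitDisk_open'.mem_nhds hz] with w hw
    exact deriv_pascalTheta' m hm q hq0 hq1 hw
  rw [hev.deriv_eq]
  exact (hasDerivAt_g1' m hm q z (w_ne_zero q hq0 hq1 (mem_unitDisk'.mp hz))).deriv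

lemma pascalTheta_analyticOn (m : ℕ) (hm : 1 ≤ m) (q : ℝ) (hq0 : 0 < q) (hq1 : q < 1) :
    AnalyticOn ℂ (pascalTheta m q) unitDisk := by
  have hw : AnalyticOnNhd ℂ (fun z : ℂ => ((1 - (q:ℂ)*z)^m)⁻¹) unitDisk := by
    apply AnalyticOnNhd.inv
    · exact (analyticOnNhd_const.sub (analyticOnNhd_const.mul analyticOnNhd_id)).pow m
    · intro z hz
      exact pow_ne_zero m (w_ne_zero q hq0 hq1 (mem_unitDisk'.mp hz))
  have hg : AnalyticOnNhd ℂ (gFun' m q) unitDisk :=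
    analyticOnNhd_id.add (analyticOnNhd_const.mul
      (analyticOnNhd_id.mul (hw.sub analyticOnNhd_const)))
  exact hg.analyticOn.congr (pascalTheta_eqOn' m hm q hq0 hq1)

lemma pascalTheta_injOn (m : ℕ) (hm : 1 ≤ m) (q : ℝ) (hq0 : 0 < q) (hq1 : q < 1)
    (hT1 : m * q / (1 - q) + (1 - (1-q)^m) < 1) :
    Set.InjOn (pascalTheta m q) unitDisk := by
  intro z1 h1 z2 h2 hf
  by_contra hne
  have hz1 : ‖z1‖ < 1 := mem_unitDisk'.mp h1
  have hz2 : ‖z2‖ < 1 := mem_unitDisk'.mp h2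
  have hS1 := theta_hasSum' m hm q hq0 hq1 hz1
  have hS2 := theta_hasSum' m hm q hq0 hq1 hz2
  have hA1 : pascalTheta m q z1 = z1 + (1 - (q:ℂ))^m * (z1 * (((1 - (q:ℂ)*z1)^m)⁻¹ - 1)) :=
    pascalTheta_eqOn' m hm q hq0 hq1 h1
  have hA2 : pascalTheta m q z2 = z2 + (1 - (q:ℂ))^m * (z2 * (((1 - (q:ℂ)*z2)^m)⁻¹ - 1)) :=
    pascalTheta_eqOn' m hm q hq0 hq1 h2
  have hval : (1 - (q:ℂ))^m * (z1 * (((1 - (q:ℂ)*z1)^m)⁻¹ - 1))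
      - (1 - (q:ℂ))^m * (z2 * (((1 - (q:ℂ)*z2)^m)⁻¹ - 1)) = -(z1 - z2) := by
    have := hf
    rw [hA1, hA2] at this
    linear_combination this
  have hdiff := hS1.sub hS2
  rw [hval] at hdiff
  have hzpos : (0:ℝ) < ‖z1 - z2‖ := by
    rw [norm_pos_iff]
    exact sub_ne_zero_of_ne hne
  have hmaj := (coeffSum_hasSum m hm q hq0 hq1).mul_right ‖z1 - z2‖
  have hbound : ‖-(z1 - z2)‖ ≤ (m * q / (1 - q) + (1 - (1-q)^m)) * ‖z1 - z2‖ := by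
    refine norm_hasSum_le' hdiff hmaj ?_
    intro n
    have he : ((n + m).choose (m - 1) : ℂ) * (q:ℂ) ^ (n + 1) * (1 - (q:ℂ)) ^ m * z1 ^ (n + 2)
        - ((n + m).choose (m - 1) : ℂ) * (q:ℂ) ^ (n + 1) * (1 - (q:ℂ)) ^ m * z2 ^ (n + 2)
        = (((n + m).choose (m - 1) : ℂ) * (q:ℂ) ^ (n + 1) * (1 - (q:ℂ)) ^ m)
          * (z1 ^ (n + 2) - z2 ^ (n + 2)) := by ring
    rw [he, norm_mul]
    have hc : ‖((n + m).choose (m - 1) : ℂ) * (q:ℂ) ^ (n + 1) * (1 - (q:ℂ)) ^ m‖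
        = ((n + m).choose (m - 1) : ℝ) * q ^ (n + 1) * (1-q)^m := by
      have he2 : ((n + m).choose (m - 1) : ℂ) * (q:ℂ) ^ (n + 1) * (1 - (q:ℂ)) ^ m
          = ((((n + m).choose (m - 1) : ℝ) * q ^ (n + 1) * (1-q)^m : ℝ) : ℂ) := by
        push_cast; ring
      rw [he2, Complex.norm_real, Real.norm_eq_abs]
      exact abs_of_nonneg (mul_nonneg (mul_nonneg (Nat.cast_nonneg _)
        (pow_nonneg hq0.le _)) (pow_nonneg (by linarith) m))
    rw [hc]
    have hp := pow_sub_pow_norm_le' z1 z2 hz1.le hz2.le (n+2)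
    have hnn : (0:ℝ) ≤ ((n + m).choose (m - 1) : ℝ) * q ^ (n + 1) * (1-q)^m :=
      mul_nonneg (mul_nonneg (Nat.cast_nonneg _) (pow_nonneg hq0.le _))
        (pow_nonneg (by linarith) m)
    calc ((n + m).choose (m - 1) : ℝ) * q ^ (n + 1) * (1-q)^m * ‖z1 ^ (n+2) - z2 ^ (n+2)‖
        ≤ ((n + m).choose (m - 1) : ℝ) * q ^ (n + 1) * (1-q)^m * ((n+2) * ‖z1 - z2‖) := by
          have : ((n:ℝ)+2) * ‖z1 - z2‖ = ((n+2 : ℕ) : ℝ) * ‖z1 - z2‖ := by push_cast; ring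
          rw [this]
          exact mul_le_mul_of_nonneg_left hp hnn
      _ = ((n + m).choose (m - 1) : ℝ) * q ^ (n + 1) * (1-q)^m * ((n:ℝ)+2) * ‖z1 - z2‖ := by
          ring
  rw [norm_neg] at hbound
  nlinarith [hbound, hzpos, hT1]

end StmtAux

lemma key_ineqs' (ρ γ c s0 s1 s2 : ℝ) (hρ1 : ρ < 1) (hγ1 : γ < 1)
    (hc : 0 < c) (hs0 : 0 < s0) (hs1 : 0 < s1) (hs2 : 0 < s2)
    (h' : (1-ρ)*s2 + (1-γ)*c*s2 + 2*(1-ρ)*s1 + (1-γ)*c*(4-ρ)*s1 + (1-γ)*c*(2-ρ)*s0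
      ≤ (1-γ)*c) :
    s0 + s1 + ρ*(s2 + 2*s1) < 1 ∧
    (1-ρ)*(s2 + 2*s1) ≤ (1-γ)*c*(1 - (s0 + s1) - ρ*(s2 + 2*s1)) := by
  constructor
  · by_contra hX
    push_neg at hX
    have hXc : (1-γ)*c ≤ (1-γ)*c*(s0 + s1 + ρ*(s2 + 2*s1)) := by
      nlinarith [mul_pos (by linarith : (0:ℝ) < 1-γ) hc]
    nlinarith [h', hXc, mul_pos hs2 (by linarith : (0:ℝ) < 1-ρ),
      mul_nonneg (mul_nonneg (by linarith : (0:ℝ) ≤ 1-γ) hc.le)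
        (mul_nonneg (by linarith : (0:ℝ) ≤ 1-ρ) hs2.le),
      mul_nonneg (mul_nonneg (by linarith : (0:ℝ) ≤ 1-γ) hc.le)
        (mul_nonneg (by linarith : (0:ℝ) ≤ 1-ρ) hs1.le),
      mul_nonneg (mul_nonneg (by linarith : (0:ℝ) ≤ 1-γ) hc.le)
        (mul_nonneg (by linarith : (0:ℝ) ≤ 1-ρ) hs0.le),
      mul_pos hs1 (by linarith : (0:ℝ) < 1-ρ)]
  · nlinarith [h',
      mul_nonneg (mul_nonneg (by linarith : (0:ℝ) ≤ 1-γ) hc.le)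
        (mul_nonneg (by linarith : (0:ℝ) ≤ 1-ρ) hs2.le),
      mul_nonneg (mul_nonneg (by linarith : (0:ℝ) ≤ 1-γ) hc.le)
        (mul_nonneg (by linarith : (0:ℝ) ≤ 1-ρ) hs1.le),
      mul_nonneg (mul_nonneg (by linarith : (0:ℝ) ≤ 1-γ) hc.le)
        (mul_nonneg (by linarith : (0:ℝ) ≤ 1-ρ) hs0.le)]

set_option maxHeartbeats 1000000 in
theorem stmt6' (m : ℕ) (hm : 1 ≤ m) (q : ℝ) (hq0 : 0 < q) (hq1 : q < 1)
    (ξ ρ γ : ℝ) (hξ : |ξ| < π / 2) (hρ0 : 0 ≤ ρ) (hρ1 : ρ < 1)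
    (hγ0 : 0 ≤ γ) (hγ1 : γ < 1)
    (h : ((1 - ρ) * (Real.cos ξ)⁻¹ + (1 - γ)) * ((m : ℝ) * ((m : ℝ) + 1) * q ^ 2 / (1 - q) ^ 2)
        + (2 * (1 - ρ) * (Real.cos ξ)⁻¹ + (1 - γ) * (4 - ρ)) * ((m : ℝ) * q / (1 - q))
        + (1 - γ) * (2 - ρ) * (1 - (1 - q) ^ m) ≤ 1 - γ) :
    SpiralK ξ γ ρ (pascalTheta m q) := by
  have h1q : (0:ℝ) < 1 - q := by linarith
  have hm0 : (0:ℝ) < m := by exact_mod_cast hm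
  have hξ' := abs_lt.mp hξ
  have hc : 0 < Real.cos ξ := Real.cos_pos_of_mem_Ioo ⟨hξ'.1, hξ'.2⟩
  set c := Real.cos ξ with hcdef
  set s2 := (m : ℝ) * ((m : ℝ) + 1) * q ^ 2 / (1 - q) ^ 2 with hs2def
  set s1 := (m : ℝ) * q / (1 - q) with hs1def
  set s0 := 1 - (1 - q) ^ m with hs0def
  have hs0 : 0 < s0 := by
    rw [hs0def]
    have := pow_lt_one₀ (by linarith : (0:ℝ) ≤ 1 - q) (by linarith : 1 - q < 1)
      (by omega : m ≠ 0)
    linarith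
  have hs1 : 0 < s1 := div_pos (mul_pos hm0 hq0) h1q
  have hs2 : 0 < s2 :=
    div_pos (mul_pos (mul_pos hm0 (by linarith)) (pow_pos hq0 2)) (pow_pos h1q 2)
  -- multiply the hypothesis by cos ξ
  have hcne : c ≠ 0 := hc.ne'
  have e : (((1-ρ) * c⁻¹ + (1-γ)) * s2 + (2*(1-ρ) * c⁻¹ + (1-γ)*(4-ρ)) * s1
      + (1-γ)*(2-ρ) * s0) * c
      = (1-ρ)*s2 + (1-γ)*c*s2 + 2*(1-ρ)*s1 + (1-γ)*c*(4-ρ)*s1 + (1-γ)*c*(2-ρ)*s0 := by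
    field_simp
    ring
  have h' : (1-ρ)*s2 + (1-γ)*c*s2 + 2*(1-ρ)*s1 + (1-γ)*c*(4-ρ)*s1 + (1-γ)*c*(2-ρ)*s0
      ≤ (1-γ)*c := by
    have := mul_le_mul_of_nonneg_right h hc.le
    rw [e] at this
    exact this
  obtain ⟨hI, hII⟩ := key_ineqs' ρ γ c s0 s1 s2 hρ1 hγ1 hc hs0 hs1 hs2 h'
  have hδ : 0 < 1 - (s0 + s1) - ρ*(s2 + 2*s1) := by linarith
  have h0disk : (0:ℂ) ∈ unitDisk := mem_unitDisk'.mpr (by simp)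
  refine ⟨⟨pascalTheta_analyticOn m hm q hq0 hq1, ?_, ?_⟩, ?_, ?_⟩
  · -- f 0 = 0
    simp [pascalTheta]
  · -- deriv f 0 = 1
    rw [deriv_pascalTheta' m hm q hq0 hq1 h0disk]
    simp [g1Fun']
  · -- injectivity
    apply pascalTheta_injOn m hm q hq0 hq1
    have : ρ*(s2 + 2*s1) ≥ 0 := by positivity
    rw [← hs1def, ← hs0def]
    linarith
  · -- the main inequality
    intro z hz
    have hz' : ‖z‖ < 1 := mem_unitDisk'.mp hz
    rw [deriv_pascalTheta' m hm q hq0 hq1 hz, deriv2_pascalTheta' m hm q hq0 hq1 hz]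
    set a := g1Fun' m q z with hadef
    set b2 := g2Fun' m q z with hb2def
    have hB1 : ‖a - 1‖ ≤ s0 + s1 := by
      have := B1_bound m hm q hq0 hq1 hz'
      rw [← hs1def, ← hs0def] at this
      linarith [this]
    have hB2 : ‖z * b2‖ < s2 + 2*s1 := by
      have := B2_bound m hm q hq0 hq1 hz'
      rw [← hs1def, ← hs2def] at this
      linarith [this]
    have hρc : ‖(ρ:ℂ)‖ = ρ := by
      rw [Complex.norm_real, Real.norm_eq_abs]
      exact abs_of_nonneg hρ0
    set D := a + (ρ:ℂ) * z * b2 with hDdef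
    have hDlow : 1 - (s0 + s1) - ρ*(s2 + 2*s1) ≤ ‖D‖ := by
      have he1 : (1:ℂ) - D = -((a - 1) + (ρ:ℂ) * (z * b2)) := by rw [hDdef]; ring
      have he2 : ‖(1:ℂ) - D‖ ≤ (s0 + s1) + ρ*(s2 + 2*s1) := by
        rw [he1, norm_neg]
        calc ‖(a - 1) + (ρ:ℂ) * (z * b2)‖ ≤ ‖a - 1‖ + ‖(ρ:ℂ) * (z * b2)‖ := norm_add_le _ _
          _ = ‖a - 1‖ + ρ * ‖z * b2‖ := by rw [norm_mul, hρc]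
          _ ≤ (s0 + s1) + ρ*(s2 + 2*s1) := by
              have := mul_le_mul_of_nonneg_left hB2.le hρ0
              linarith
      have he3 : ‖(1:ℂ)‖ - ‖(1:ℂ) - D‖ ≤ ‖(1:ℂ) - ((1:ℂ) - D)‖ := norm_sub_norm_le _ _
      have he4 : (1:ℂ) - ((1:ℂ) - D) = D := by ring
      rw [he4, norm_one] at he3
      linarith
    have hDne : D ≠ 0 := by
      intro h0
      rw [h0, norm_zero] at hDlow
      linarith
    constructor
    · exact hDne
    · have key : Complex.exp (Complex.I * ξ) * (z * b2 + a) / (a + (ρ:ℂ) * z * b2)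
          = Complex.exp (Complex.I * ξ)
            + Complex.exp (Complex.I * ξ) * ((1 - (ρ:ℂ)) * (z * b2)) / D := by
        rw [hDdef]
        have hD' : a + (ρ:ℂ) * z * b2 ≠ 0 := hDne
        rw [add_div' _ _ _ hD', div_left_inj' hD']
        ring
      rw [key, Complex.add_re]
      have hre1 : (Complex.exp (Complex.I * ξ)).re = c := by
        rw [mul_comm]
        exact Complex.exp_ofReal_mul_I_re ξ
      rw [hre1]
      set rest := Complex.exp (Complex.I * ξ) * ((1 - (ρ:ℂ)) * (z * b2)) / D with hrestdef
      have hexp1 : ‖Complex.exp (Complex.I * ξ)‖ = 1 := by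
        rw [mul_comm]
        exact Complex.norm_exp_ofReal_mul_I ξ
      have h1ρ : ‖(1:ℂ) - (ρ:ℂ)‖ = 1 - ρ := by
        have : (1:ℂ) - (ρ:ℂ) = ((1 - ρ : ℝ) : ℂ) := by push_cast; ring
        rw [this, Complex.norm_real, Real.norm_eq_abs]
        exact abs_of_nonneg (by linarith)
      have hrestnorm : ‖rest‖ = (1-ρ) * ‖z * b2‖ / ‖D‖ := by
        rw [hrestdef, norm_div, norm_mul, norm_mul, hexp1, h1ρ, one_mul]
      have hδD : (1-ρ) * ‖z * b2‖ / ‖D‖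
          ≤ (1-ρ) * ‖z * b2‖ / (1 - (s0 + s1) - ρ*(s2 + 2*s1)) := by
        apply div_le_div_of_nonneg_left (mul_nonneg (by linarith) (norm_nonneg _)) hδ hDlow
      have hnum : (1-ρ) * ‖z * b2‖ < (1-ρ) * (s2 + 2*s1) :=
        mul_lt_mul_of_pos_left hB2 (by linarith)
      have hstep : (1-ρ) * (s2 + 2*s1) / (1 - (s0 + s1) - ρ*(s2 + 2*s1)) ≤ (1-γ)*c :=
        (div_le_iff₀ hδ).mpr hII
      have hrestlt : ‖rest‖ < (1-γ)*c := by
        rw [hrestnorm]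
        calc (1-ρ) * ‖z * b2‖ / ‖D‖
            ≤ (1-ρ) * ‖z * b2‖ / (1 - (s0 + s1) - ρ*(s2 + 2*s1)) := hδD
          _ < (1-ρ) * (s2 + 2*s1) / (1 - (s0 + s1) - ρ*(s2 + 2*s1)) :=
              (div_lt_div_iff_of_pos_right hδ).mpr hnum
          _ ≤ (1-γ)*c := hstep
      have hre2 : -‖rest‖ ≤ rest.re := by
        have h1 : |rest.re| ≤ ‖rest‖ := by
          exact Complex.abs_re_le_norm rest
        exact (abs_le.mp h1).1
      nlinarith [hrestlt, hre2]

/-- Theorem 2, `Θ_q^m ∈ 𝒦(ξ, γ, ρ)`. -/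
theorem stmt6 (m : ℕ) (hm : 1 ≤ m) (q : ℝ) (hq0 : 0 < q) (hq1 : q < 1)
    (ξ ρ γ : ℝ) (hξ : |ξ| < π / 2) (hρ0 : 0 ≤ ρ) (hρ1 : ρ < 1)
    (hγ0 : 0 ≤ γ) (hγ1 : γ < 1)
    (h : ((1 - ρ) * (Real.cos ξ)⁻¹ + (1 - γ)) * ((m : ℝ) * ((m : ℝ) + 1) * q ^ 2 / (1 - q) ^ 2)
        + (2 * (1 - ρ) * (Real.cos ξ)⁻¹ + (1 - γ) * (4 - ρ)) * ((m : ℝ) * q / (1 - q))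
        + (1 - γ) * (2 - ρ) * (1 - (1 - q) ^ m) ≤ 1 - γ) :
    SpiralK ξ γ ρ (pascalTheta m q) :=
  stmt6' m hm q hq0 hq1 ξ ρ γ hξ hρ0 hρ1 hγ0 hγ1 h
end
end

section
/- Let m ≥ 1 be an integer, 0 < q < 1, |ξ| < π/2 and 0 ≤ γ < 1. If q m sec ξ / (1-q)^{m+1} ≤ 1 - γ, then the Pascal distribution series Θ_q^m belongs to the class 𝒮(ξ, γ). -/
noncomputable section

open Complex Real Set

namespace Stmt11Aux

/-- Closed form of the Pascal distribution series. -/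
noncomputable def pF (k : ℕ) (q : ℝ) : ℂ → ℂ := fun z =>
  (1 - (q:ℂ))^(k+1) * z * ((1 - (q:ℂ)*z)^(k+1))⁻¹ + (1 - (1 - (q:ℂ))^(k+1)) * z

lemma hasSum_complex {k : ℕ} {q : ℝ} (hq0 : 0 < q) (hq1 : q < 1) {z : ℂ} (hz : ‖z‖ < 1) :
    HasSum (fun n : ℕ => ((n + (k+1)).choose k : ℂ) * (q:ℂ)^(n+1) * (1 - (q:ℂ))^(k+1) * z^(n+2))
      (pF k q z - z) := by
  have hqz : ‖(q:ℂ) * z‖ < 1 := by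
    rw [norm_mul, Complex.norm_real, Real.norm_eq_abs, abs_of_pos hq0]
    nlinarith [norm_nonneg z]
  have h0 := hasSum_choose_mul_geometric_of_norm_lt_one (𝕜 := ℂ) k hqz
  have h1 : HasSum (fun n : ℕ => (((n+1)+k).choose k : ℂ) * ((q:ℂ)*z)^(n+1))
      (1/(1-(q:ℂ)*z)^(k+1) - 1) := by
    apply (hasSum_nat_add_iff (f := fun n : ℕ => ((n+k).choose k : ℂ) * ((q:ℂ)*z)^n) 1).2
    simpa using h0
  have h2 := h1.mul_left ((1 - (q:ℂ))^(k+1) * z)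
  convert h2 using 1
  · rfl
  · funext n
    rw [show (n+1)+k = n+(k+1) from by omega]
    ring
  · simp only [pF]
    field_simp
    ring

lemma hasSum_real0 {k : ℕ} {q : ℝ} (hq0 : 0 < q) (hq1 : q < 1) :
    HasSum (fun n : ℕ => ((n + (k+1)).choose k : ℝ) * q^(n+1) * (1 - q)^(k+1))
      (1 - (1-q)^(k+1)) := by
  have hq : ‖q‖ < 1 := by rw [Real.norm_eq_abs, abs_of_pos hq0]; exact hq1
  have h0 := hasSum_choose_mul_geometric_of_norm_lt_one (𝕜 := ℝ) k hq
  have h1 : HasSum (fun n : ℕ => (((n+1)+k).choose k : ℝ) * q^(n+1))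
      (1/(1-q)^(k+1) - 1) := by
    apply (hasSum_nat_add_iff (f := fun n : ℕ => ((n+k).choose k : ℝ) * q^n) 1).2
    simpa using h0
  have h2 := h1.mul_left ((1 - q)^(k+1))
  convert h2 using 1
  · rfl
  · funext n
    rw [show (n+1)+k = n+(k+1) from by omega]
    ring
  · have hne : (1-q)^(k+1) ≠ 0 := pow_ne_zero _ (by linarith)
    field_simp

lemma nat_id (n k : ℕ) : (n + (k+1)).choose (k+1) * (k+1) = (n + (k+1)).choose k * (n+1) := by
  have := Nat.choose_succ_right_eq (n + (k+1)) k
  simpa [show n + (k+1) - k = n+1 from by omega] using this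

lemma hasSum_real1 {k : ℕ} {q : ℝ} (hq0 : 0 < q) (hq1 : q < 1) :
    HasSum (fun n : ℕ => ((n:ℝ)+1) * ((n + (k+1)).choose k : ℝ) * q^(n+1) * (1 - q)^(k+1))
      (((k:ℝ)+1) * q * (1-q)^(k+1) / (1-q)^(k+2)) := by
  have hq : ‖q‖ < 1 := by rw [Real.norm_eq_abs, abs_of_pos hq0]; exact hq1
  have h0 := hasSum_choose_mul_geometric_of_norm_lt_one (𝕜 := ℝ) (k+1) hq
  have h2 := h0.mul_left (((k:ℝ)+1) * q * (1-q)^(k+1))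
  convert h2 using 1
  · rfl
  · funext n
    have hc : ((n + (k+1)).choose (k+1) : ℝ) * ((k:ℝ)+1)
        = ((n + (k+1)).choose k : ℝ) * ((n:ℝ)+1) := by
      exact_mod_cast congrArg (Nat.cast (R := ℝ)) (nat_id n k)
    linear_combination (-(q^(n+1) * (1-q)^(k+1))) * hc
  · rw [div_eq_mul_one_div]

lemma pF_hasDerivAt {k : ℕ} {q : ℝ} {z : ℂ} (hw : (1:ℂ) - (q:ℂ)*z ≠ 0) :
    HasDerivAt (pF k q)
      ((1-(q:ℂ))^(k+1) * ((1 - (q:ℂ)*z)^(k+1))⁻¹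
        + (1-(q:ℂ))^(k+1) * z * (((k:ℂ)+1) * (1-(q:ℂ)*z)^k * q / ((1-(q:ℂ)*z)^(k+1))^2)
        + (1 - (1-(q:ℂ))^(k+1))) z := by
  have h1 : HasDerivAt (fun z : ℂ => 1 - (q:ℂ)*z) (-(q:ℂ)) z := by
    simpa using ((hasDerivAt_id z).const_mul (q:ℂ)).const_sub 1
  have h2 := h1.pow (k+1)
  have h3 := h2.inv (pow_ne_zero _ hw)
  have h4 := ((hasDerivAt_id z).const_mul ((1-(q:ℂ))^(k+1))).mul h3
  have h5 := h4.add ((hasDerivAt_id z).const_mul (1 - (1-(q:ℂ))^(k+1)))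
  refine h5.congr_deriv ?_
  simp only [Nat.add_sub_cancel, id_eq, Pi.inv_apply, Pi.pow_apply]
  push_cast
  ring

lemma mem_unitDisk {z : ℂ} : z ∈ unitDisk ↔ ‖z‖ < 1 := by
  simp [unitDisk, Metric.mem_ball, dist_zero_right]

lemma neg_norm_le_re (c : ℂ) : -‖c‖ ≤ c.re := by
  have h1 : -c.re ≤ |c.re| := neg_le_abs _
  have h2 : |c.re| ≤ ‖c‖ := Complex.abs_re_le_norm c
  linarith

lemma pow_diff_bound (z w : ℂ) (N : ℕ) :
    ‖z^(N+1) - w^(N+1)‖ ≤ ((N:ℝ)+1) * (max ‖z‖ ‖w‖)^N * ‖z - w‖ := by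
  induction N with
  | zero => simp
  | succ N ih =>
    have hzM : ‖z‖ ≤ max ‖z‖ ‖w‖ := le_max_left _ _
    have hwM : ‖w‖ ≤ max ‖z‖ ‖w‖ := le_max_right _ _
    have hM0 : 0 ≤ max ‖z‖ ‖w‖ := le_trans (norm_nonneg _) hzM
    have key : z^(N+2) - w^(N+2) = z * (z^(N+1) - w^(N+1)) + (z - w) * w^(N+1) := by ring
    push_cast
    rw [key]
    calc ‖z * (z^(N+1) - w^(N+1)) + (z - w) * w^(N+1)‖
        ≤ ‖z * (z^(N+1) - w^(N+1))‖ + ‖(z - w) * w^(N+1)‖ := norm_add_le _ _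
      _ = ‖z‖ * ‖z^(N+1) - w^(N+1)‖ + ‖z - w‖ * ‖w‖^(N+1) := by
          rw [norm_mul, norm_mul, norm_pow]
      _ ≤ (max ‖z‖ ‖w‖) * (((N:ℝ)+1) * (max ‖z‖ ‖w‖)^N * ‖z - w‖)
          + ‖z - w‖ * (max ‖z‖ ‖w‖)^(N+1) := by
          gcongr
      _ = ((N:ℝ)+1+1) * (max ‖z‖ ‖w‖)^(N+1) * ‖z - w‖ := by ring

end Stmt11Aux

set_option maxHeartbeats 1600000 in
/-- Corollary 1, `Θ_q^m ∈ 𝒮(ξ, γ)`. -/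
theorem stmt11 (m : ℕ) (hm : 1 ≤ m) (q : ℝ) (hq0 : 0 < q) (hq1 : q < 1)
    (ξ γ : ℝ) (hξ : |ξ| < π / 2) (hγ0 : 0 ≤ γ) (hγ1 : γ < 1)
    (h : q * m * (Real.cos ξ)⁻¹ / (1 - q) ^ (m + 1) ≤ 1 - γ) :
    SpiralS0 ξ γ (pascalTheta m q) := by
  obtain ⟨k, rfl⟩ : ∃ k, m = k + 1 := ⟨m - 1, by omega⟩
  clear hm
  open Stmt11Aux in
  -- basic facts
  have hq' : (0:ℝ) < 1 - q := by linarith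
  have hβpos : (0:ℝ) < (1-q)^(k+1) := pow_pos hq' _
  have hβle : (1-q)^(k+1) ≤ 1 := pow_le_one₀ (by linarith) (by linarith)
  have hcos : 0 < Real.cos ξ := by
    rcases abs_lt.1 hξ with ⟨h1, h2⟩
    exact Real.cos_pos_of_mem_Ioo ⟨h1, h2⟩
  have hcos1 : Real.cos ξ ≤ 1 := Real.cos_le_one ξ
  have hA : 0 < (1-γ) * Real.cos ξ := mul_pos (by linarith) hcos
  have hkey : q * ((k:ℝ)+1) ≤ (1-γ) * Real.cos ξ * (1-q)^(k+2) := by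
    have hp : (0:ℝ) < (1-q)^(k+1+1) := pow_pos hq' _
    rw [div_le_iff₀ hp] at h
    have h2 := mul_le_mul_of_nonneg_right h (le_of_lt hcos)
    push_cast at h2
    have hcosne : Real.cos ξ ≠ 0 := ne_of_gt hcos
    calc q * ((k:ℝ)+1) = q * ((k:ℝ)+1) * (Real.cos ξ)⁻¹ * Real.cos ξ := by
          field_simp
      _ ≤ (1 - γ) * (1-q)^(k+1+1) * Real.cos ξ := h2
      _ = (1-γ) * Real.cos ξ * (1-q)^(k+2) := by ring
  have hkey1 : q * ((k:ℝ)+1) ≤ (1-q)^(k+2) := by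
    calc q * ((k:ℝ)+1) ≤ (1-γ) * Real.cos ξ * (1-q)^(k+2) := hkey
      _ ≤ 1 * (1-q)^(k+2) := by
          apply mul_le_mul_of_nonneg_right _ (le_of_lt (pow_pos hq' _))
          nlinarith
      _ = (1-q)^(k+2) := one_mul _
  -- equality with closed form on the disk
  have hEq : ∀ z ∈ unitDisk, pascalTheta (k+1) q z = pF k q z := by
    intro z hz
    rw [mem_unitDisk] at hz
    have hs := hasSum_complex (k := k) hq0 hq1 hz
    simp only [pascalTheta, Nat.add_sub_cancel]
    rw [hs.tsum_eq]
    ring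
  have hOpen : IsOpen unitDisk := Metric.isOpen_ball
  -- nonvanishing of 1 - q z on the disk
  have hwne : ∀ z : ℂ, ‖z‖ < 1 → (1:ℂ) - (q:ℂ)*z ≠ 0 := by
    intro z hz hcon
    have h1 : ‖(q:ℂ)*z‖ < 1 := by
      rw [norm_mul, Complex.norm_real, Real.norm_eq_abs, abs_of_pos hq0]
      nlinarith [norm_nonneg z]
    have : (1:ℂ) = (q:ℂ)*z := by linear_combination hcon
    rw [← this] at h1
    simp at h1
  -- norm lower bound for 1 - q z
  have hwlow : ∀ z : ℂ, 1 - q * ‖z‖ ≤ ‖(1:ℂ) - (q:ℂ)*z‖ := by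
    intro z
    have := norm_sub_norm_le (1:ℂ) ((q:ℂ)*z)
    rw [norm_one, norm_mul, Complex.norm_real, Real.norm_eq_abs, abs_of_pos hq0] at this
    exact this
  -- lower bound for ‖pF z‖
  have hFlow : ∀ z : ℂ, ‖z‖ < 1 →
      ‖z‖ - (1 - (1-q)^(k+1)) * ‖z‖^2 ≤ ‖pF k q z‖ := by
    intro z hz
    have hs := hasSum_complex (k := k) hq0 hq1 hz
    have hb := (hasSum_real0 (k := k) hq0 hq1).mul_right (‖z‖^2)
    have hnorm : ∀ n : ℕ,
        ‖((n + (k+1)).choose k : ℂ) * (q:ℂ)^(n+1) * (1 - (q:ℂ))^(k+1) * z^(n+2)‖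
          ≤ ((n + (k+1)).choose k : ℝ) * q^(n+1) * (1 - q)^(k+1) * ‖z‖^2 := by
      intro n
      have he : ‖((n + (k+1)).choose k : ℂ) * (q:ℂ)^(n+1) * (1 - (q:ℂ))^(k+1) * z^(n+2)‖
          = ((n + (k+1)).choose k : ℝ) * q^(n+1) * (1 - q)^(k+1) * ‖z‖^(n+2) := by
        rw [norm_mul, norm_mul, norm_mul, norm_pow, norm_pow, norm_pow]
        rw [Complex.norm_natCast, Complex.norm_real, Real.norm_eq_abs, abs_of_pos hq0]
        rw [show (1 : ℂ) - (q:ℝ) = ((1 - q : ℝ) : ℂ) by push_cast; ring]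
        rw [Complex.norm_real, Real.norm_eq_abs, abs_of_pos hq']
      rw [he]
      have hz2 : ‖z‖^(n+2) ≤ ‖z‖^2 :=
        pow_le_pow_of_le_one (norm_nonneg z) (le_of_lt hz) (by omega)
      have hc0 : (0:ℝ) ≤ ((n + (k+1)).choose k : ℝ) * q^(n+1) * (1 - q)^(k+1) := by positivity
      exact mul_le_mul_of_nonneg_left hz2 hc0
    have hsumm : Summable (fun n : ℕ =>
        ‖((n + (k+1)).choose k : ℂ) * (q:ℂ)^(n+1) * (1 - (q:ℂ))^(k+1) * z^(n+2)‖) :=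
      Summable.of_nonneg_of_le (fun n => norm_nonneg _) hnorm hb.summable
    have htsum : ‖pF k q z - z‖ ≤ (1 - (1-q)^(k+1)) * ‖z‖^2 := by
      rw [← hs.tsum_eq]
      calc ‖∑' n : ℕ, ((n + (k+1)).choose k : ℂ) * (q:ℂ)^(n+1) * (1 - (q:ℂ))^(k+1) * z^(n+2)‖
          ≤ ∑' n : ℕ, ‖((n + (k+1)).choose k : ℂ) * (q:ℂ)^(n+1) * (1 - (q:ℂ))^(k+1) * z^(n+2)‖ :=
            norm_tsum_le_tsum_norm hsumm
        _ ≤ ∑' n : ℕ, ((n + (k+1)).choose k : ℝ) * q^(n+1) * (1 - q)^(k+1) * ‖z‖^2 :=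
            Summable.tsum_le_tsum hnorm hsumm hb.summable
        _ = (1 - (1-q)^(k+1)) * ‖z‖^2 := hb.tsum_eq
    have h2 := norm_sub_le (pF k q z) (pF k q z - z)
    rw [sub_sub_cancel] at h2
    linarith
  refine ⟨⟨?_, ?_, ?_⟩, ?_, ?_⟩
  · -- AnalyticOn
    have hFan : AnalyticOnNhd ℂ (pF k q) unitDisk := by
      intro z hz
      rw [mem_unitDisk] at hz
      have hw := hwne z hz
      apply AnalyticAt.add
      · apply AnalyticAt.mul
        · exact analyticAt_const.mul analyticAt_id
        · exact ((analyticAt_const.sub (analyticAt_const.mul analyticAt_id)).pow _).inv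
            (pow_ne_zero _ hw)
      · exact analyticAt_const.mul analyticAt_id
    exact (hFan.congr hOpen (fun z hz => (hEq z hz).symm)).analyticOn
  · -- f 0 = 0
    simp [pascalTheta]
  · -- deriv f 0 = 1
    have h0 : (0:ℂ) ∈ unitDisk := by simp [unitDisk]
    have hev : pascalTheta (k+1) q =ᶠ[nhds (0:ℂ)] pF k q :=
      Filter.eventuallyEq_of_mem (hOpen.mem_nhds h0) hEq
    rw [hev.deriv_eq]
    have hw : (1:ℂ) - (q:ℂ)*(0:ℂ) ≠ 0 := by simp
    have := (pF_hasDerivAt (k := k) (q := q) hw).deriv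
    rw [this]
    simp
  · -- injectivity
    intro z hz w hw hfzw
    by_contra hne
    rw [mem_unitDisk] at hz hw
    set M := max ‖z‖ ‖w‖ with hM
    have hM1 : M < 1 := max_lt hz hw
    have hM0 : 0 ≤ M := le_trans (norm_nonneg z) (le_max_left _ _)
    have hzw : (0:ℝ) < ‖z - w‖ := by
      rw [norm_pos_iff, sub_ne_zero]
      exact hne
    have hsz := hasSum_complex (k := k) hq0 hq1 hz
    have hsw := hasSum_complex (k := k) hq0 hq1 hw
    have hpFzw : pF k q z = pF k q w := by
      rw [← hEq z (mem_unitDisk.mpr hz), ← hEq w (mem_unitDisk.mpr hw)]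
      exact hfzw
    have hdiff := hsz.sub hsw
    have hval : pF k q z - z - (pF k q w - w) = w - z := by
      rw [hpFzw]; ring
    rw [hval] at hdiff
    -- sum S2 of (n+2) * a_n
    have hS2 : HasSum (fun n : ℕ => ((n:ℝ)+2) * ((n + (k+1)).choose k : ℝ) * q^(n+1) * (1-q)^(k+1))
        (((k:ℝ)+1) * q * (1-q)^(k+1) / (1-q)^(k+2) + (1 - (1-q)^(k+1))) := by
      have := (hasSum_real1 (k := k) hq0 hq1).add (hasSum_real0 (k := k) hq0 hq1)
      convert this using 1
      funext n
      ring
    have hT1 : ((k:ℝ)+1) * q * (1-q)^(k+1) / (1-q)^(k+2) + (1 - (1-q)^(k+1)) ≤ 1 := by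
      have hp2 : (0:ℝ) < (1-q)^(k+2) := pow_pos hq' _
      have : ((k:ℝ)+1) * q * (1-q)^(k+1) / (1-q)^(k+2) ≤ (1-q)^(k+1) := by
        rw [div_le_iff₀ hp2]
        calc ((k:ℝ)+1) * q * (1-q)^(k+1) = (q * ((k:ℝ)+1)) * (1-q)^(k+1) := by ring
          _ ≤ (1-q)^(k+2) * (1-q)^(k+1) := mul_le_mul_of_nonneg_right hkey1 (le_of_lt hβpos)
          _ = (1-q)^(k+1) * (1-q)^(k+2) := by ring
      linarith
    have hb := hS2.mul_right (M * ‖z - w‖)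
    have hnorm : ∀ n : ℕ,
        ‖((n + (k+1)).choose k : ℂ) * (q:ℂ)^(n+1) * (1 - (q:ℂ))^(k+1) * z^(n+2)
          - ((n + (k+1)).choose k : ℂ) * (q:ℂ)^(n+1) * (1 - (q:ℂ))^(k+1) * w^(n+2)‖
        ≤ ((n:ℝ)+2) * ((n + (k+1)).choose k : ℝ) * q^(n+1) * (1-q)^(k+1) * (M * ‖z - w‖) := by
      intro n
      have hfac : ((n + (k+1)).choose k : ℂ) * (q:ℂ)^(n+1) * (1 - (q:ℂ))^(k+1) * z^(n+2)
          - ((n + (k+1)).choose k : ℂ) * (q:ℂ)^(n+1) * (1 - (q:ℂ))^(k+1) * w^(n+2)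
          = ((n + (k+1)).choose k : ℂ) * (q:ℂ)^(n+1) * (1 - (q:ℂ))^(k+1) * (z^(n+2) - w^(n+2)) := by
        ring
      rw [hfac, norm_mul, norm_mul, norm_mul, norm_pow, norm_pow]
      rw [Complex.norm_natCast, Complex.norm_real, Real.norm_eq_abs, abs_of_pos hq0]
      rw [show (1 : ℂ) - (q:ℝ) = ((1 - q : ℝ) : ℂ) by push_cast; ring]
      rw [Complex.norm_real, Real.norm_eq_abs, abs_of_pos hq']
      have hpd : ‖z^(n+2) - w^(n+2)‖ ≤ ((n:ℝ)+2) * M * ‖z - w‖ := by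
        have := pow_diff_bound z w (n+1)
        have hMn : M^(n+1) ≤ M := pow_le_of_le_one hM0 (le_of_lt hM1) (by omega)
        calc ‖z^(n+2) - w^(n+2)‖ ≤ ((n:ℝ)+1+1) * M^(n+1) * ‖z - w‖ := by
              convert this using 3 <;> push_cast <;> ring
          _ ≤ ((n:ℝ)+2) * M * ‖z - w‖ := by
              have : ((n:ℝ)+1+1) * M^(n+1) ≤ ((n:ℝ)+2) * M := by
                have h1 : ((n:ℝ)+1+1) = ((n:ℝ)+2) := by ring
                rw [h1]
                exact mul_le_mul_of_nonneg_left hMn (by positivity)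
              exact mul_le_mul_of_nonneg_right this (norm_nonneg _)
      calc ((n + (k+1)).choose k : ℝ) * q^(n+1) * (1-q)^(k+1) * ‖z^(n+2) - w^(n+2)‖
          ≤ ((n + (k+1)).choose k : ℝ) * q^(n+1) * (1-q)^(k+1) * (((n:ℝ)+2) * M * ‖z - w‖) := by
            apply mul_le_mul_of_nonneg_left hpd (by positivity)
        _ = ((n:ℝ)+2) * ((n + (k+1)).choose k : ℝ) * q^(n+1) * (1-q)^(k+1) * (M * ‖z - w‖) := by
            ring
    have hsumm : Summable (fun n : ℕ =>
        ‖((n + (k+1)).choose k : ℂ) * (q:ℂ)^(n+1) * (1 - (q:ℂ))^(k+1) * z^(n+2)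
          - ((n + (k+1)).choose k : ℂ) * (q:ℂ)^(n+1) * (1 - (q:ℂ))^(k+1) * w^(n+2)‖) :=
      Summable.of_nonneg_of_le (fun n => norm_nonneg _) hnorm hb.summable
    have hfinal : ‖z - w‖ ≤ M * ‖z - w‖ := by
      have h1 : ‖w - z‖ ≤ (((k:ℝ)+1) * q * (1-q)^(k+1) / (1-q)^(k+2) + (1 - (1-q)^(k+1)))
          * (M * ‖z - w‖) := by
        rw [← hdiff.tsum_eq]
        calc ‖∑' n : ℕ, (((n + (k+1)).choose k : ℂ) * (q:ℂ)^(n+1) * (1 - (q:ℂ))^(k+1) * z^(n+2)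
              - ((n + (k+1)).choose k : ℂ) * (q:ℂ)^(n+1) * (1 - (q:ℂ))^(k+1) * w^(n+2))‖
            ≤ ∑' n : ℕ, ‖((n + (k+1)).choose k : ℂ) * (q:ℂ)^(n+1) * (1 - (q:ℂ))^(k+1) * z^(n+2)
              - ((n + (k+1)).choose k : ℂ) * (q:ℂ)^(n+1) * (1 - (q:ℂ))^(k+1) * w^(n+2)‖ :=
              norm_tsum_le_tsum_norm hsumm
          _ ≤ ∑' n : ℕ, ((n:ℝ)+2) * ((n + (k+1)).choose k : ℝ) * q^(n+1) * (1-q)^(k+1)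
              * (M * ‖z - w‖) := Summable.tsum_le_tsum hnorm hsumm hb.summable
          _ = _ := hb.tsum_eq
      rw [norm_sub_rev] at h1
      calc ‖z - w‖ ≤ (((k:ℝ)+1) * q * (1-q)^(k+1) / (1-q)^(k+2) + (1 - (1-q)^(k+1)))
          * (M * ‖z - w‖) := h1
        _ ≤ 1 * (M * ‖z - w‖) := mul_le_mul_of_nonneg_right hT1 (by positivity)
        _ = M * ‖z - w‖ := one_mul _
    nlinarith
  · -- the spirallike inequality
    intro z hzmem hz0
    rw [mem_unitDisk] at hzmem
    have hr0 : (0:ℝ) < ‖z‖ := norm_pos_iff.mpr hz0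
    have hw := hwne z hzmem
    have hwl := hwlow z
    have hqr : q * ‖z‖ < 1 := by nlinarith
    have hwpos : (0:ℝ) < ‖(1:ℂ) - (q:ℂ)*z‖ := by linarith
    -- the derivative
    have hev : pascalTheta (k+1) q =ᶠ[nhds z] pF k q :=
      Filter.eventuallyEq_of_mem (hOpen.mem_nhds (mem_unitDisk.mpr hzmem)) hEq
    have hD : deriv (pascalTheta (k+1) q) z
        = (1-(q:ℂ))^(k+1) * ((1 - (q:ℂ)*z)^(k+1))⁻¹
          + (1-(q:ℂ))^(k+1) * z * (((k:ℂ)+1) * (1-(q:ℂ)*z)^k * q / ((1-(q:ℂ)*z)^(k+1))^2)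
          + (1 - (1-(q:ℂ))^(k+1)) := by
      rw [hev.deriv_eq]
      exact (pF_hasDerivAt (k := k) (q := q) hw).deriv
    set D := deriv (pascalTheta (k+1) q) z with hDdef
    set F := pF k q z with hFdef
    -- key identity
    have hE : z * D - F = (1-(q:ℂ))^(k+1) * (((k:ℂ)+1)) * q * z^2 * (1-(q:ℂ)*z)^k
        / ((1-(q:ℂ)*z)^(k+1))^2 := by
      rw [hD, hFdef]
      simp only [pF]
      have hw' : (1:ℂ) - z*q ≠ 0 := by rwa [mul_comm]
      field_simp
      ring
    -- norm of E
    have hEnorm : ‖z * D - F‖ ≤ (1-q)^(k+1) * ((k:ℝ)+1) * q * ‖z‖^2 / (1 - q*‖z‖)^(k+2) := by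
      rw [hE]
      rw [show (1 : ℂ) - (q:ℝ) = ((1 - q : ℝ) : ℂ) by push_cast; ring,
        show ((k:ℂ)+1) = (((k:ℝ)+1 : ℝ) : ℂ) by push_cast; ring]
      simp only [norm_div, norm_mul, norm_pow]
      rw [Complex.norm_real, Complex.norm_real, Complex.norm_real]
      rw [Real.norm_eq_abs, Real.norm_eq_abs, Real.norm_eq_abs, abs_of_pos hq',
        abs_of_pos (show (0:ℝ) < (k:ℝ)+1 by positivity), abs_of_pos hq0]
      set W := ‖(1:ℂ) - (q:ℂ)*z‖
      have hWq : 1 - q*‖z‖ ≤ W := hwl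
      have hWpos : 0 < W := hwpos
      have h1qr : (0:ℝ) < 1 - q*‖z‖ := by linarith
      rw [div_le_div_iff₀ (pow_pos (pow_pos hWpos _) _) (pow_pos h1qr _)]
      have hcancel : (1-q)^(k+1) * ((k:ℝ)+1) * q * ‖z‖^2 * W^k * (1 - q*‖z‖)^(k+2)
          ≤ (1-q)^(k+1) * ((k:ℝ)+1) * q * ‖z‖^2 * (W^(k+1))^2 := by
        have h2 : W^k * (1 - q*‖z‖)^(k+2) ≤ (W^(k+1))^2 := by
          have : (W^(k+1))^2 = W^k * W^(k+2) := by ring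
          rw [this]
          apply mul_le_mul_of_nonneg_left _ (by positivity)
          exact pow_le_pow_left₀ (le_of_lt h1qr) hWq _
        calc (1-q)^(k+1) * ((k:ℝ)+1) * q * ‖z‖^2 * W^k * (1 - q*‖z‖)^(k+2)
            = (1-q)^(k+1) * ((k:ℝ)+1) * q * ‖z‖^2 * (W^k * (1 - q*‖z‖)^(k+2)) := by ring
          _ ≤ (1-q)^(k+1) * ((k:ℝ)+1) * q * ‖z‖^2 * (W^(k+1))^2 := by
              apply mul_le_mul_of_nonneg_left h2 (by positivity)
      linarith
    -- lower bound for F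
    have hFl : ‖z‖ - (1 - (1-q)^(k+1)) * ‖z‖^2 ≤ ‖F‖ := hFlow z hzmem
    have hFpos : (0:ℝ) < ‖F‖ := by
      have hid : ‖z‖ - (1 - (1-q)^(k+1)) * ‖z‖^2
          = ‖z‖*(1-‖z‖) + (1-q)^(k+1)*‖z‖^2 := by ring
      have h1 : 0 < ‖z‖*(1-‖z‖) := mul_pos hr0 (by linarith)
      have h2 : 0 < (1-q)^(k+1)*‖z‖^2 := by positivity
      linarith
    have hFne : F ≠ 0 := norm_pos_iff.mp hFpos
    have hfz : pascalTheta (k+1) q z = F :=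
      hEq z (mem_unitDisk.mpr hzmem)
    refine ⟨by rw [hfz]; exact hFne, ?_⟩
    -- main numeric inequality : ‖E‖ < (1-γ) cos ξ ‖F‖
    have hnum : ‖z * D - F‖ < (1-γ) * Real.cos ξ * ‖F‖ := by
      have h1qr : (0:ℝ) < 1 - q*‖z‖ := by linarith
      have hple : (1-q)^(k+2) ≤ (1 - q*‖z‖)^(k+2) := by
        apply pow_le_pow_left₀ (le_of_lt hq')
        nlinarith
      have hstep1 : (1-q)^(k+1) * ((k:ℝ)+1) * q * ‖z‖^2 / (1 - q*‖z‖)^(k+2)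
          ≤ (1-γ) * Real.cos ξ * ((1-q)^(k+1) * ‖z‖^2) := by
        rw [div_le_iff₀ (pow_pos h1qr _)]
        calc (1-q)^(k+1) * ((k:ℝ)+1) * q * ‖z‖^2
            = (q * ((k:ℝ)+1)) * ((1-q)^(k+1) * ‖z‖^2) := by ring
          _ ≤ ((1-γ) * Real.cos ξ * (1-q)^(k+2)) * ((1-q)^(k+1) * ‖z‖^2) :=
              mul_le_mul_of_nonneg_right hkey (by positivity)
          _ ≤ ((1-γ) * Real.cos ξ * (1 - q*‖z‖)^(k+2)) * ((1-q)^(k+1) * ‖z‖^2) := by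
              apply mul_le_mul_of_nonneg_right _ (by positivity)
              apply mul_le_mul_of_nonneg_left hple (by positivity)
          _ = (1-γ) * Real.cos ξ * ((1-q)^(k+1) * ‖z‖^2) * (1 - q*‖z‖)^(k+2) := by ring
      have hstep2 : (1-γ) * Real.cos ξ * ((1-q)^(k+1) * ‖z‖^2)
          < (1-γ) * Real.cos ξ * ‖F‖ := by
        apply mul_lt_mul_of_pos_left _ hA
        have hid : ‖z‖ - (1 - (1-q)^(k+1)) * ‖z‖^2 - (1-q)^(k+1) * ‖z‖^2
            = ‖z‖*(1-‖z‖) := by ring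
        have h1 : 0 < ‖z‖*(1-‖z‖) := mul_pos hr0 (by linarith)
        linarith
      calc ‖z * D - F‖ ≤ (1-q)^(k+1) * ((k:ℝ)+1) * q * ‖z‖^2 / (1 - q*‖z‖)^(k+2) := hEnorm
        _ ≤ (1-γ) * Real.cos ξ * ((1-q)^(k+1) * ‖z‖^2) := hstep1
        _ < (1-γ) * Real.cos ξ * ‖F‖ := hstep2
    -- conclude on the real part
    have hsplit : Complex.exp (Complex.I * ξ) * (z * D) / F
        = Complex.exp (Complex.I * ξ) + Complex.exp (Complex.I * ξ) * (z * D - F) / F := by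
      rw [show Complex.exp (Complex.I * ξ) * (z * D)
          = Complex.exp (Complex.I * ξ) * F + Complex.exp (Complex.I * ξ) * (z * D - F) from by
            ring,
        add_div, mul_div_cancel_right₀ _ hFne]
    rw [hfz, hsplit]
    have hre1 : (Complex.exp (Complex.I * ξ)).re = Real.cos ξ := by
      rw [mul_comm]
      exact Complex.exp_ofReal_mul_I_re ξ
    have hre2 : -((1-γ) * Real.cos ξ) < (Complex.exp (Complex.I * ξ) * (z * D - F) / F).re := by
      have habs : ‖Complex.exp (Complex.I * ξ) * (z * D - F) / F‖ < (1-γ) * Real.cos ξ := by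
        rw [norm_div, norm_mul]
        have hexp : ‖Complex.exp (Complex.I * ξ)‖ = 1 := by
          rw [mul_comm]
          exact Complex.norm_exp_ofReal_mul_I ξ
        rw [hexp, one_mul, div_lt_iff₀ hFpos]
        calc ‖z * D - F‖ < (1-γ) * Real.cos ξ * ‖F‖ := hnum
          _ = (1-γ) * Real.cos ξ * ‖F‖ := rfl
      calc -((1-γ) * Real.cos ξ) < -‖Complex.exp (Complex.I * ξ) * (z * D - F) / F‖ := by
            linarith
        _ ≤ (Complex.exp (Complex.I * ξ) * (z * D - F) / F).re :=
            neg_norm_le_re _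
    rw [Complex.add_re, hre1]
    linarith
end
end

section
/- Let m ≥ 1 be an integer, 0 < q < 1, |ξ| < π/2, 0 ≤ ρ < 1 and 0 ≤ γ < 1. Then Σ_{n=2}^∞ [ (1-ρ)(n-1) sec ξ + (1-γ)(1 + nρ - ρ) ] · C(n+m-2, m-1) q^{n-1} (1-q)^m = [ (1-ρ) sec ξ + ρ(1-γ) ] · q m / (1-q) + (1-γ) · ( 1 - (1-q)^m ). -/
noncomputable section

open Complex Real Set

private lemma aux_hasSum_choose (k : ℕ) {q : ℝ} (hq : |q| < 1) :
    HasSum (fun n : ℕ => ((n + k).choose k : ℝ) * q ^ n) (1 / (1 - q) ^ (k + 1)) :=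
  hasSum_choose_mul_geometric_of_norm_lt_one k (by simpa using hq)

private lemma aux_hasSum_mul_choose (k : ℕ) {q : ℝ} (hq : |q| < 1) :
    HasSum (fun n : ℕ => (n : ℝ) * ((n + k).choose k : ℝ) * q ^ n)
      ((k + 1) * q / (1 - q) ^ (k + 2)) := by
  have hq1 : (1 : ℝ) - q ≠ 0 := by
    have := abs_lt.1 hq
    intro h; nlinarith
  have H1 : HasSum (fun n : ℕ => ((n + (k + 1)).choose (k + 1) : ℝ) * q ^ n)
      (1 / (1 - q) ^ (k + 2)) := aux_hasSum_choose (k + 1) hq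
  have H2 := aux_hasSum_choose k hq
  have H := ((H1.sub H2).mul_left ((k : ℝ) + 1))
  have key : ∀ n : ℕ, (n : ℝ) * ((n + k).choose k : ℝ) * q ^ n
      = ((k : ℝ) + 1) * (((n + (k + 1)).choose (k + 1) : ℝ) * q ^ n
      - ((n + k).choose k : ℝ) * q ^ n) := by
    intro n
    have h1 : (n + k + 1) * (n + k).choose k = (n + k + 1).choose (k + 1) * (k + 1) :=
      Nat.add_one_mul_choose_eq (n + k) k
    have h2 : ((n + k + 1 : ℕ) : ℝ) * ((n + k).choose k : ℝ)
        = ((n + k + 1).choose (k + 1) : ℝ) * ((k : ℝ) + 1) := by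
      exact_mod_cast congrArg (Nat.cast : ℕ → ℝ) h1
    have h3 : n + (k + 1) = n + k + 1 := by omega
    rw [h3]
    push_cast at h2
    linear_combination q ^ n * h2
  rw [show ((k : ℝ) + 1) * (1 / (1 - q) ^ (k + 2) - 1 / (1 - q) ^ (k + 1))
      = ((k : ℝ) + 1) * q / (1 - q) ^ (k + 2) by
    have hpow : (1 - q) ^ (k + 2) = (1 - q) ^ (k + 1) * (1 - q) := by ring
    field_simp
    ring] at H
  exact H.congr_fun key

/-- closed form of the weighted coefficient sum of `Θ_q^m`. -/
theorem stmt18 (m : ℕ) (hm : 1 ≤ m) (q : ℝ) (hq0 : 0 < q) (hq1 : q < 1)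
    (ξ ρ γ : ℝ) (hξ : |ξ| < π / 2) (hρ0 : 0 ≤ ρ) (hρ1 : ρ < 1)
    (hγ0 : 0 ≤ γ) (hγ1 : γ < 1) :
    ∑' n : ℕ,
      ((1 - ρ) * ((n : ℝ) + 1) * (Real.cos ξ)⁻¹ +
        (1 - γ) * (1 + ((n : ℝ) + 2) * ρ - ρ)) *
        ((n + m).choose (m - 1) : ℝ) * q ^ (n + 1) * (1 - q) ^ m
      = ((1 - ρ) * (Real.cos ξ)⁻¹ + ρ * (1 - γ)) * (q * m / (1 - q))
        + (1 - γ) * (1 - (1 - q) ^ m) := by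
  obtain ⟨k, rfl⟩ : ∃ k, m = k + 1 := ⟨m - 1, (Nat.succ_pred_eq_of_pos hm).symm⟩
  have hq : |q| < 1 := abs_lt.2 ⟨by linarith, hq1⟩
  have hq1' : (1 : ℝ) - q ≠ 0 := by intro h; nlinarith
  set A : ℝ := (1 - ρ) * (Real.cos ξ)⁻¹ + ρ * (1 - γ) with hA
  set B : ℝ := 1 - γ with hB
  have H2 := aux_hasSum_choose k hq
  have H1 := aux_hasSum_mul_choose k hq
  have H2' : HasSum (fun n : ℕ => ((n + 1 + k).choose k : ℝ) * q ^ (n + 1))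
      (1 / (1 - q) ^ (k + 1) - 1) := by
    have := (hasSum_nat_add_iff' (f := fun n : ℕ => ((n + k).choose k : ℝ) * q ^ n) 1).2 H2
    simpa using this
  have H1' : HasSum (fun n : ℕ => ((n : ℝ) + 1) * ((n + 1 + k).choose k : ℝ) * q ^ (n + 1))
      ((k + 1) * q / (1 - q) ^ (k + 2)) := by
    have := (hasSum_nat_add_iff'
      (f := fun n : ℕ => (n : ℝ) * ((n + k).choose k : ℝ) * q ^ n) 1).2 H1
    simpa using this
  have HF := (((H1'.mul_left A).add (H2'.mul_left B)).mul_right ((1 - q) ^ (k + 1)))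
  have hcongr : ∀ n : ℕ,
      ((1 - ρ) * ((n : ℝ) + 1) * (Real.cos ξ)⁻¹ +
          (1 - γ) * (1 + ((n : ℝ) + 2) * ρ - ρ)) *
          ((n + (k + 1)).choose (k + 1 - 1) : ℝ) * q ^ (n + 1) * (1 - q) ^ (k + 1)
      = (A * (((n : ℝ) + 1) * ((n + 1 + k).choose k : ℝ) * q ^ (n + 1))
        + B * (((n + 1 + k).choose k : ℝ) * q ^ (n + 1))) * (1 - q) ^ (k + 1) := by
    intro n
    have : n + (k + 1) = n + 1 + k := by omega
    rw [this]
    simp only [hA, hB, Nat.add_sub_cancel]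
    ring
  have HF' := HF.congr_fun hcongr
  rw [HF'.tsum_eq]
  have hpow : (1 - q) ^ (k + 2) = (1 - q) ^ (k + 1) * (1 - q) := by ring
  have hpne : (1 - q) ^ (k + 1) ≠ 0 := pow_ne_zero _ hq1'
  push_cast
  field_simp
  ring
end
end
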